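/- Let d ≥ 1, let P_1, …, P_{d+1} ⊆ ℝ^d be pairwise disjoint finite sets with |P_i| ≤ d+1 and 0 ∈ conv(P_i) for every i = 1, …, d+1, and let ε be a real number with 0 < ε ≤ 1. Then there exists a set C ⊆ P_1 ∪ … ∪ P_{d+1} with 0 ∈ conv(C) and |C ∩ P_i| ≤ ⌈ε(d+1)⌉ for every i, i.e., an ⌈ε(d+1)⌉-colorful choice containing the origin in its convex hull. -/

import Mathlib

open scoped Classical


open scoped RealInnerProductSpace in
private lemma seg_dec' {E : Type*} [NormedAddCommGroup E] [InnerProductSpace ℝ E]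
    (x p : E) (hp : ⟪x, p⟫ < ‖x‖ ^ 2) :
    ∃ z ∈ segment ℝ x p, ‖z‖ < ‖x‖ := by
  have hpx : p ≠ x := by
    intro h
    rw [h, real_inner_self_eq_norm_sq] at hp
    exact lt_irrefl _ hp
  set c : ℝ := ‖x‖ ^ 2 - ⟪x, p⟫ with hc
  have hc0 : 0 < c := by simp [hc]; linarith
  set q : ℝ := ‖p - x‖ ^ 2 with hq
  have hq0 : 0 < q := by
    have h1 : p - x ≠ 0 := sub_ne_zero.2 hpx
    have h2 : ‖p - x‖ ≠ 0 := norm_ne_zero_iff.2 h1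
    positivity
  set t : ℝ := min 1 (c / q) with ht
  have ht0 : 0 < t := lt_min one_pos (div_pos hc0 hq0)
  have ht1 : t ≤ 1 := min_le_left _ _
  have htq : t * q ≤ c := by
    have h1 : t ≤ c / q := min_le_right _ _
    calc t * q ≤ (c / q) * q := by nlinarith
    _ = c := by field_simp
  refine ⟨x + t • (p - x), ?_, ?_⟩
  · rw [segment_eq_image']
    exact ⟨t, ⟨le_of_lt ht0, ht1⟩, rfl⟩
  · have hz2 : ‖x + t • (p - x)‖ ^ 2 = ‖x‖ ^ 2 - 2 * t * c + t ^ 2 * q := by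
      rw [norm_add_sq_real, real_inner_smul_right, inner_sub_right,
        real_inner_self_eq_norm_sq, norm_smul]
      have : |t| = t := abs_of_pos ht0
      rw [Real.norm_eq_abs, this, mul_pow]
      simp only [hc, hq]
      ring
    have hlt : ‖x + t • (p - x)‖ ^ 2 < ‖x‖ ^ 2 := by
      rw [hz2]; nlinarith
    have := norm_nonneg (x + t • (p - x))
    nlinarith [norm_nonneg x]

open scoped RealInnerProductSpace in
private lemma variational' {E : Type*} [NormedAddCommGroup E] [InnerProductSpace ℝ E]
    {K : Set E} (hK : Convex ℝ K) {x : E}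
    (hxK : x ∈ K) (hmin : ∀ z ∈ K, ‖x‖ ≤ ‖z‖) :
    ∀ w ∈ K, ‖x‖ ^ 2 ≤ ⟪x, w⟫ := by
  intro w hw
  by_contra h
  push_neg at h
  obtain ⟨z, hzseg, hzlt⟩ := seg_dec' x w h
  exact absurd (hmin z (hK.segment_subset hxK hw hzseg)) (not_le.2 hzlt)

open scoped RealInnerProductSpace in
private lemma halfspace_pt' {E : Type*} [NormedAddCommGroup E] [InnerProductSpace ℝ E]
    (x : E) (P : Finset E)
    (h0 : (0 : E) ∈ convexHull ℝ (P : Set E)) :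
    ∃ p ∈ P, ⟪x, p⟫ ≤ 0 := by
  by_contra h
  push_neg at h
  have hconv : Convex ℝ {y : E | 0 < ⟪x, y⟫} :=
    convex_halfSpace_gt ⟨fun a b => inner_add_right _ _ _,
      fun r a => real_inner_smul_right _ _ _⟩ 0
  have hsub : (P : Set E) ⊆ {y : E | 0 < ⟪x, y⟫} := fun y hy => h y hy
  have := convexHull_min hsub hconv h0
  simp at this

open scoped RealInnerProductSpace in
private lemma cara_hyperplane' {E : Type*} [NormedAddCommGroup E] [InnerProductSpace ℝ E]
    [FiniteDimensional ℝ E] {d : ℕ}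
    (hdim : Module.finrank ℝ E = d) {x : E} (hx0 : x ≠ 0)
    {s : Set E} (hs : s ⊆ {y : E | ⟪x, y⟫ = ‖x‖ ^ 2})
    (hxs : x ∈ convexHull ℝ s) :
    ∃ t : Finset E, ↑t ⊆ s ∧ t.card ≤ d ∧ x ∈ convexHull ℝ (t : Set E) := by
  rw [convexHull_eq_union] at hxs
  simp only [Set.mem_iUnion, exists_prop] at hxs
  obtain ⟨t, hts, hai, hxt⟩ := hxs
  refine ⟨t, hts, ?_, hxt⟩
  have htne : t.Nonempty := by
    rcases t.eq_empty_or_nonempty with rfl | h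
    · simp at hxt
    · exact h
  have : Nonempty {y // y ∈ t} := ⟨⟨htne.choose, htne.choose_spec⟩⟩
  set φ : E →ₗ[ℝ] ℝ := (innerSL ℝ x).toLinearMap with hφ
  have hφx : φ x = ‖x‖ ^ 2 := real_inner_self_eq_norm_sq x
  have hvs : vectorSpan ℝ (t : Set E) ≤ LinearMap.ker φ := by
    rw [vectorSpan_def, Submodule.span_le]
    rintro v ⟨a, ha, b, hb, rfl⟩
    have ha' := hs (hts ha)
    have hb' := hs (hts hb)
    simp only [Set.mem_setOf_eq] at ha' hb'
    simp only [SetLike.mem_coe, LinearMap.mem_ker, vsub_eq_sub, hφ]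
    simp [inner_sub_right, ha', hb']
  have hxx : ‖x‖ ^ 2 ≠ 0 := pow_ne_zero _ (norm_ne_zero_iff.2 hx0)
  have hrange : LinearMap.range φ = ⊤ := LinearMap.range_eq_top.2 (fun r =>
    ⟨(r / ‖x‖ ^ 2) • x, by rw [map_smul, hφx, smul_eq_mul]; field_simp⟩)
  have hd1 : 0 < d := by
    have : Nontrivial E := nontrivial_of_ne x 0 hx0
    rw [← hdim]; exact Module.finrank_pos
  have hker : Module.finrank ℝ (LinearMap.ker φ) + 1 = d := by
    have h5 := LinearMap.finrank_range_add_finrank_ker φ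
    rw [hrange, finrank_top, Module.finrank_self, hdim] at h5
    omega
  have hcard : Module.finrank ℝ (vectorSpan ℝ (t : Set E)) + 1 = t.card := by
    have h3 := hai.finrank_vectorSpan_add_one
    have h4 : Set.range (Subtype.val : {y // y ∈ t} → E) = (t : Set E) := by
      rw [Subtype.range_coe_subtype]; ext y; simp
    rw [h4, Fintype.card_coe] at h3
    exact h3
  have hle := Submodule.finrank_mono hvs
  omega


open scoped RealInnerProductSpace

/-- Approximation of the colorful Carathéodory theorem: given `d + 1` pairwise
disjoint color classes in `ℝ^d`, each of size at most `d + 1` and each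
containing the origin in its convex hull, and any `0 < ε ≤ 1`, there is an
`⌈ε(d+1)⌉`-colorful choice containing the origin in its convex hull. -/
theorem eps_colorful_choice (d : ℕ) (hd : 1 ≤ d)
    (P : Fin (d + 1) → Finset (EuclideanSpace ℝ (Fin d)))
    (hdisj : ∀ i j, i ≠ j → Disjoint (P i) (P j))
    (hcard : ∀ i, (P i).card ≤ d + 1)
    (h0 : ∀ i, (0 : EuclideanSpace ℝ (Fin d)) ∈
      convexHull ℝ ((P i : Set (EuclideanSpace ℝ (Fin d)))))
    (ε : ℝ) (hε₀ : 0 < ε) (hε₁ : ε ≤ 1) :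
    ∃ C : Finset (EuclideanSpace ℝ (Fin d)),
      C ⊆ Finset.univ.biUnion P ∧
      (0 : EuclideanSpace ℝ (Fin d)) ∈
        convexHull ℝ ((C : Set (EuclideanSpace ℝ (Fin d)))) ∧
      ∀ i, (C ∩ P i).card ≤ ⌈ε * (d + 1 : ℝ)⌉₊ := by
  classical
  have hm : 1 ≤ ⌈ε * (d + 1 : ℝ)⌉₊ := Nat.ceil_pos.2 (by positivity)
  have hPne : ∀ i, (P i).Nonempty := by
    intro i
    rcases (P i).eq_empty_or_nonempty with h | h
    · exfalso; have h2 := h0 i; rw [h] at h2; simp at h2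
    · exact h
  let Ω := ∀ i : Fin (d + 1), {y // y ∈ P i}
  have hΩne : Nonempty Ω := ⟨fun i => ⟨(hPne i).choose, (hPne i).choose_spec⟩⟩
  let g : Ω → ℝ := fun f =>
    Metric.infDist 0 (convexHull ℝ (Set.range fun i => (f i : (EuclideanSpace ℝ (Fin d)))))
  obtain ⟨f₀, hf₀⟩ := Finite.exists_min g
  set K : Set (EuclideanSpace ℝ (Fin d)) := convexHull ℝ (Set.range fun i => (f₀ i : (EuclideanSpace ℝ (Fin d)))) with hK
  have hKfin : (Set.range fun i => (f₀ i : (EuclideanSpace ℝ (Fin d)))).Finite := Set.finite_range _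
  have hKcpt : IsCompact K := hKfin.isCompact_convexHull ℝ
  have hKne : K.Nonempty := ⟨f₀ 0, subset_convexHull ℝ _ ⟨0, rfl⟩⟩
  have hKconv : Convex ℝ K := convex_convexHull ℝ _
  by_cases hg : g f₀ = 0
  · -- the minimal colorful choice works
    have h0K : (0 : (EuclideanSpace ℝ (Fin d))) ∈ K :=
      (hKcpt.isClosed.mem_iff_infDist_zero hKne).2 hg
    refine ⟨Finset.image (fun i => (f₀ i : (EuclideanSpace ℝ (Fin d)))) Finset.univ, ?_, ?_, ?_⟩
    · intro y hy
      obtain ⟨i, _, rfl⟩ := Finset.mem_image.1 hy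
      exact Finset.mem_biUnion.2 ⟨i, Finset.mem_univ i, (f₀ i).2⟩
    · have : ((Finset.image (fun i => (f₀ i : (EuclideanSpace ℝ (Fin d)))) Finset.univ : Finset (EuclideanSpace ℝ (Fin d))) : Set (EuclideanSpace ℝ (Fin d)))
          = Set.range fun i => (f₀ i : (EuclideanSpace ℝ (Fin d))) := by
        rw [Finset.coe_image, Finset.coe_univ, Set.image_univ]
      rw [this]; exact h0K
    · intro i
      have hsub : (Finset.image (fun i => (f₀ i : (EuclideanSpace ℝ (Fin d)))) Finset.univ) ∩ P i
          ⊆ {(f₀ i : (EuclideanSpace ℝ (Fin d)))} := by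
        intro y hy
        obtain ⟨hy1, hy2⟩ := Finset.mem_inter.1 hy
        obtain ⟨j, _, rfl⟩ := Finset.mem_image.1 hy1
        rcases eq_or_ne j i with rfl | hji
        · exact Finset.mem_singleton_self _
        · exact absurd hy2 (Finset.disjoint_left.1 (hdisj j i hji) (f₀ j).2)
      calc _ ≤ ({(f₀ i : (EuclideanSpace ℝ (Fin d)))} : Finset (EuclideanSpace ℝ (Fin d))).card := Finset.card_le_card hsub
        _ = 1 := Finset.card_singleton _
        _ ≤ _ := hm
  · -- derive a contradiction from minimality
    exfalso
    have hgpos : 0 < g f₀ := lt_of_le_of_ne Metric.infDist_nonneg (Ne.symm hg)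
    obtain ⟨x, hxK, hxd⟩ := hKcpt.exists_infDist_eq_dist hKne 0
    have hgK : g f₀ = Metric.infDist 0 K := rfl
    have hxnorm : ‖x‖ = g f₀ := by rw [hgK, hxd, dist_eq_norm, zero_sub, norm_neg]
    have hx0 : x ≠ 0 := by
      intro h; rw [h, norm_zero] at hxnorm; exact hg hxnorm.symm
    have hxpos : (0 : ℝ) < ‖x‖ ^ 2 := by
      have := norm_pos_iff.2 hx0; positivity
    have hmin : ∀ z ∈ K, ‖x‖ ≤ ‖z‖ := by
      intro z hz
      rw [hxnorm, hgK]
      have h6 : Metric.infDist 0 K ≤ dist (0 : EuclideanSpace ℝ (Fin d)) z :=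
        Metric.infDist_le_dist_of_mem hz
      rwa [dist_eq_norm, zero_sub, norm_neg] at h6
    have hvar : ∀ w ∈ K, ‖x‖ ^ 2 ≤ ⟪x, w⟫ := variational' hKconv hxK hmin
    -- weights representation
    set s : Finset (EuclideanSpace ℝ (Fin d)) := Finset.image (fun i => (f₀ i : (EuclideanSpace ℝ (Fin d)))) Finset.univ with hs
    have hscoe : (s : Set (EuclideanSpace ℝ (Fin d))) = Set.range fun i => (f₀ i : (EuclideanSpace ℝ (Fin d))) := by
      rw [hs, Finset.coe_image, Finset.coe_univ, Set.image_univ]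
    have hxs : x ∈ convexHull ℝ (s : Set (EuclideanSpace ℝ (Fin d))) := by rw [hscoe]; exact hxK
    rw [Finset.convexHull_eq] at hxs
    obtain ⟨w, hw0, hw1, hwx⟩ := hxs
    have hge : ∀ y ∈ s, ‖x‖ ^ 2 ≤ ⟪x, y⟫ := by
      intro y hy
      exact hvar y (subset_convexHull ℝ _ (by rw [← hscoe]; exact_mod_cast hy))
    have hsum0 : ∑ y ∈ s, w y * (⟪x, y⟫ - ‖x‖ ^ 2) = 0 := by
      have hcm : ∑ y ∈ s, w y • y = x := by
        have h7 := Finset.centerMass_eq_of_sum_1 s id hw1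
        simp only [id] at h7
        rw [← h7]; exact hwx
      have h1 : ∑ y ∈ s, w y * ⟪x, y⟫ = ‖x‖ ^ 2 := by
        have h8 : ⟪x, ∑ y ∈ s, w y • y⟫ = ∑ y ∈ s, w y * ⟪x, y⟫ := by
          rw [inner_sum]
          exact Finset.sum_congr rfl (fun y _ => real_inner_smul_right _ _ _)
        rw [← h8, hcm, real_inner_self_eq_norm_sq]
      have h2 : ∑ y ∈ s, w y * ‖x‖ ^ 2 = ‖x‖ ^ 2 := by
        rw [← Finset.sum_mul, hw1, one_mul]
      simp only [mul_sub, Finset.sum_sub_distrib, h1, h2, sub_self]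
    have hterm : ∀ y ∈ s, w y * (⟪x, y⟫ - ‖x‖ ^ 2) = 0 :=
      (Finset.sum_eq_zero_iff_of_nonneg (fun y hy =>
        mul_nonneg (hw0 y hy) (sub_nonneg.2 (hge y hy)))).1 hsum0
    set s' : Finset (EuclideanSpace ℝ (Fin d)) := {y ∈ s | w y ≠ 0} with hs'
    have hs'H : (s' : Set (EuclideanSpace ℝ (Fin d))) ⊆ {y : (EuclideanSpace ℝ (Fin d)) | ⟪x, y⟫ = ‖x‖ ^ 2} := by
      intro y hy
      have hy' := Finset.mem_filter.1 (by exact_mod_cast hy)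
      rcases mul_eq_zero.1 (hterm y hy'.1) with h | h
      · exact absurd h hy'.2
      · exact sub_eq_zero.1 h
    have hxs' : x ∈ convexHull ℝ (s' : Set (EuclideanSpace ℝ (Fin d))) := by
      have hcm' : s'.centerMass w id = x := by
        rw [hs', Finset.centerMass_filter_ne_zero]; exact hwx
      rw [← hcm']
      refine Finset.centerMass_mem_convexHull s'
        (fun y hy => hw0 y (Finset.mem_of_mem_filter y hy)) ?_
        (fun y hy => Finset.mem_coe.2 hy)
      rw [hs', Finset.sum_filter_ne_zero, hw1]; norm_num
    -- Carathéodory in the hyperplane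
    obtain ⟨t, hts', htcard, hxt⟩ :=
      cara_hyperplane' (finrank_euclideanSpace_fin (𝕜 := ℝ) (n := d)) hx0 hs'H hxs'
    -- an unused color
    have hinj : ∀ i j : Fin (d + 1), (f₀ i : (EuclideanSpace ℝ (Fin d))) = (f₀ j : (EuclideanSpace ℝ (Fin d))) → i = j := by
      intro i j hij
      by_contra hne
      exact Finset.disjoint_left.1 (hdisj i j hne) (f₀ i).2 (hij ▸ (f₀ j).2)
    set I : Finset (Fin (d + 1)) := {i ∈ Finset.univ | (f₀ i : (EuclideanSpace ℝ (Fin d))) ∈ t} with hI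
    have hIcard : I.card ≤ t.card := by
      refine Finset.card_le_card_of_injOn (fun i => (f₀ i : (EuclideanSpace ℝ (Fin d)))) ?_ ?_
      · intro i hi; exact (Finset.mem_filter.1 hi).2
      · intro i _ j _ hij; exact hinj i j hij
    obtain ⟨i₀, hi₀⟩ : ∃ i₀ : Fin (d + 1), i₀ ∉ I := by
      by_contra h
      push_neg at h
      have : I = Finset.univ := Finset.eq_univ_iff_forall.2 (fun i => h i)
      rw [this, Finset.card_univ, Fintype.card_fin] at hIcard
      omega
    have hi₀t : (f₀ i₀ : (EuclideanSpace ℝ (Fin d))) ∉ t := fun h =>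
      hi₀ (Finset.mem_filter.2 ⟨Finset.mem_univ _, h⟩)
    obtain ⟨p, hpP, hpx⟩ := halfspace_pt' x (P i₀) (h0 i₀)
    -- the improved colorful choice
    set f₁ : Ω := Function.update f₀ i₀ ⟨p, hpP⟩ with hf₁
    set K₁ : Set (EuclideanSpace ℝ (Fin d)) := convexHull ℝ (Set.range fun i => (f₁ i : (EuclideanSpace ℝ (Fin d)))) with hK₁
    have hxK₁ : x ∈ K₁ := by
      refine convexHull_mono ?_ hxt
      intro y hy
      have hys : y ∈ s := Finset.mem_of_mem_filter y (by exact_mod_cast hts' hy)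
      obtain ⟨j, _, hj⟩ := Finset.mem_image.1 hys
      have hji₀ : j ≠ i₀ := by
        intro h; rw [h] at hj; rw [← hj] at hy; exact hi₀t (by exact_mod_cast hy)
      exact ⟨j, by simp only [hf₁, Function.update_of_ne hji₀]; exact hj⟩
    have hpK₁ : p ∈ K₁ :=
      subset_convexHull ℝ _ ⟨i₀, by simp only [hf₁, Function.update_self]⟩
    have hplt : ⟪x, p⟫ < ‖x‖ ^ 2 := lt_of_le_of_lt hpx hxpos
    obtain ⟨z, hzseg, hzlt⟩ := seg_dec' x p hplt
    have hzK₁ : z ∈ K₁ :=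
      (convex_convexHull ℝ _).segment_subset hxK₁ hpK₁ hzseg
    have : g f₁ < g f₀ := by
      calc g f₁ ≤ dist 0 z := Metric.infDist_le_dist_of_mem hzK₁
        _ = ‖z‖ := by rw [dist_eq_norm, zero_sub, norm_neg]
        _ < ‖x‖ := hzlt
        _ = g f₀ := hxnorm
    exact absurd (hf₀ f₁) (not_le.2 this)
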